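/- Let D > 0 and let v_1,…,v_m ∈ ℝ^r with ‖v_i‖_∞ ≤ D for all i, and set u = Σ_{i=1}^m v_i. Then there exists a permutation π of {1,…,m} such that for every k ∈ {1,…,m}, the ℓ∞-distance of the partial sum Σ_{j=1}^k v_{π(j)} to the line segment {t·u : t ∈ [0,1]} is at most r·D. -/

import Mathlib

open Finset

section SteinitzAux

variable {m r : ℕ} (v : Fin m → Fin r → ℝ) (u : Fin r → ℝ)

/-- Feasibility of a fractional assignment. -/
def SFeas (B : Finset (Fin m)) (c : ℝ) (μ : Fin m → ℝ) (t : ℝ) : Prop :=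
  (∀ i ∈ B, μ i ∈ Set.Icc (0:ℝ) 1) ∧ t ∈ Set.Icc (0:ℝ) 1 ∧
  (∑ i ∈ B, μ i = c) ∧ (∀ l, ∑ i ∈ B, μ i * v i l = t * u l)

/-- fractional (interior) coordinates. -/
noncomputable def sfracs (B : Finset (Fin m)) (μ : Fin m → ℝ) : Finset (Fin m) :=
  B.filter (fun i => μ i ≠ 0 ∧ μ i ≠ 1)

noncomputable def sfc (B : Finset (Fin m)) (μ : Fin m → ℝ) (t : ℝ) : ℕ :=
  (sfracs B μ).card + (if t ≠ 0 ∧ t ≠ 1 then 1 else 0)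

lemma exists_rel (r : ℕ) {ι : Type*} [Fintype ι] (hcard : r + 1 < Fintype.card ι)
    (g : ι → Fin (r+1) → ℝ) : ∃ c : ι → ℝ, (∑ i, c i • g i = 0) ∧ ∃ i, c i ≠ 0 := by
  have hni : ¬ LinearIndependent ℝ g := by
    intro h
    have := h.fintype_card_le_finrank
    rw [Module.finrank_pi] at this
    simp at this
    omega
  obtain ⟨c, hc, i, hi⟩ := Fintype.not_linearIndependent_iff.mp hni
  exact ⟨c, hc, i, hi⟩

lemma sum_coe_attach {α : Type*} (F : Finset α) (f : {i // i ∈ F} → ℝ) :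
    ∑ x : {i // i ∈ F}, f x = ∑ x ∈ F.attach, f x := rfl

lemma exists_direction {B : Finset (Fin m)} {μ : Fin m → ℝ} {t : ℝ}
    (hfc : r + 2 ≤ sfc B μ t) :
    ∃ (δ : Fin m → ℝ) (dt : ℝ),
      (∀ i, i ∉ sfracs B μ → δ i = 0) ∧
      (∑ i ∈ B, δ i = 0) ∧
      (∀ l, ∑ i ∈ B, δ i * v i l = dt * u l) ∧
      ((t = 0 ∨ t = 1) → dt = 0) ∧
      ((∃ i ∈ sfracs B μ, δ i ≠ 0) ∨ dt ≠ 0) := by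
  have hFB : sfracs B μ ⊆ B := Finset.filter_subset _ _
  by_cases ht : t ≠ 0 ∧ t ≠ 1
  · -- t interior : use Option {i // i ∈ F}
    have hcardF : r + 1 ≤ (sfracs B μ).card := by
      unfold sfc at hfc; rw [if_pos ht] at hfc; omega
    have hcard : r + 1 < Fintype.card (Option {i // i ∈ sfracs B μ}) := by
      rw [Fintype.card_option, Fintype.card_coe]; omega
    obtain ⟨c, hc, o, ho⟩ := exists_rel r hcard
      (fun o => Option.elim o (Fin.cons 0 u) (fun i => Fin.cons 1 (v i)))
    refine ⟨fun i => if h : i ∈ sfracs B μ then c (some ⟨i, h⟩) else 0, - c none,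
      ?_, ?_, ?_, ?_, ?_⟩
    · intro i hi; simp [hi]
    · have h0 := congrFun hc 0
      rw [Finset.sum_apply] at h0
      simp only [Pi.smul_apply, smul_eq_mul, Pi.zero_apply] at h0
      rw [Fintype.sum_option] at h0
      simp only [Option.elim, Fin.cons_zero, mul_zero, mul_one, zero_add] at h0
      calc ∑ i ∈ B, (if h : i ∈ sfracs B μ then c (some ⟨i, h⟩) else 0)
          = ∑ i ∈ sfracs B μ, (if h : i ∈ sfracs B μ then c (some ⟨i, h⟩) else 0) := by
            rw [Finset.sum_subset hFB]; intro i _ hiF; simp [hiF]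
        _ = ∑ a ∈ (sfracs B μ).attach,
              (if h : (a:Fin m) ∈ sfracs B μ then c (some ⟨a, h⟩) else 0) :=
            (Finset.sum_attach _ _).symm
        _ = ∑ a ∈ (sfracs B μ).attach, c (some a) := by
            apply Finset.sum_congr rfl; intro a _; rw [dif_pos a.2]
        _ = 0 := by rw [← sum_coe_attach]; exact h0
    · intro l
      have h0 := congrFun hc (Fin.succ l)
      rw [Finset.sum_apply] at h0
      simp only [Pi.smul_apply, smul_eq_mul, Pi.zero_apply] at h0
      rw [Fintype.sum_option] at h0
      simp only [Option.elim, Fin.cons_succ] at h0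
      have key : ∑ i ∈ B, (if h : i ∈ sfracs B μ then c (some ⟨i, h⟩) else 0) * v i l
          = ∑ a ∈ (sfracs B μ).attach, c (some a) * v a l := by
        calc ∑ i ∈ B, (if h : i ∈ sfracs B μ then c (some ⟨i, h⟩) else 0) * v i l
            = ∑ i ∈ sfracs B μ, (if h : i ∈ sfracs B μ then c (some ⟨i, h⟩) else 0) * v i l := by
              rw [Finset.sum_subset hFB]; intro i _ hiF; simp [hiF]
          _ = ∑ a ∈ (sfracs B μ).attach,
                (if h : (a:Fin m) ∈ sfracs B μ then c (some ⟨a, h⟩) else 0) * v a l :=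
              (Finset.sum_attach _ _).symm
          _ = ∑ a ∈ (sfracs B μ).attach, c (some a) * v a l := by
              apply Finset.sum_congr rfl; intro a _; rw [dif_pos a.2]
      rw [key, ← sum_coe_attach]
      linarith [h0]
    · intro hb; rcases ht with ⟨h1, h2⟩; rcases hb with h | h <;> tauto
    · cases o with
      | none => right; simpa using ho
      | some a =>
        left; exact ⟨a.1, a.2, by simp only [dif_pos a.2]; simpa using ho⟩
  · -- t boundary
    have hcardF : r + 2 ≤ (sfracs B μ).card := by
      unfold sfc at hfc; rw [if_neg ht] at hfc; omega
    have hcard : r + 1 < Fintype.card {i // i ∈ sfracs B μ} := by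
      rw [Fintype.card_coe]; omega
    obtain ⟨c, hc, a0, ha0⟩ := exists_rel r hcard
      (fun i : {i // i ∈ sfracs B μ} => Fin.cons 1 (v i))
    refine ⟨fun i => if h : i ∈ sfracs B μ then c ⟨i, h⟩ else 0, 0,
      ?_, ?_, ?_, fun _ => rfl, ?_⟩
    · intro i hi; simp [hi]
    · have h0 := congrFun hc 0
      rw [Finset.sum_apply] at h0
      simp only [Pi.smul_apply, smul_eq_mul, Pi.zero_apply, Fin.cons_zero, mul_one] at h0
      calc ∑ i ∈ B, (if h : i ∈ sfracs B μ then c ⟨i, h⟩ else 0)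
          = ∑ i ∈ sfracs B μ, (if h : i ∈ sfracs B μ then c ⟨i, h⟩ else 0) := by
            rw [Finset.sum_subset hFB]; intro i _ hiF; simp [hiF]
        _ = ∑ a ∈ (sfracs B μ).attach,
              (if h : (a:Fin m) ∈ sfracs B μ then c ⟨a, h⟩ else 0) :=
            (Finset.sum_attach _ _).symm
        _ = ∑ a ∈ (sfracs B μ).attach, c a := by
            apply Finset.sum_congr rfl; intro a _; rw [dif_pos a.2]
        _ = 0 := by rw [← sum_coe_attach]; exact h0
    · intro l
      have h0 := congrFun hc (Fin.succ l)
      rw [Finset.sum_apply] at h0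
      simp only [Pi.smul_apply, smul_eq_mul, Pi.zero_apply, Fin.cons_succ] at h0
      have key : ∑ i ∈ B, (if h : i ∈ sfracs B μ then c ⟨i, h⟩ else 0) * v i l
          = ∑ a ∈ (sfracs B μ).attach, c a * v a l := by
        calc ∑ i ∈ B, (if h : i ∈ sfracs B μ then c ⟨i, h⟩ else 0) * v i l
            = ∑ i ∈ sfracs B μ, (if h : i ∈ sfracs B μ then c ⟨i, h⟩ else 0) * v i l := by
              rw [Finset.sum_subset hFB]; intro i _ hiF; simp [hiF]
          _ = ∑ a ∈ (sfracs B μ).attach,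
                (if h : (a:Fin m) ∈ sfracs B μ then c ⟨a, h⟩ else 0) * v a l :=
              (Finset.sum_attach _ _).symm
          _ = ∑ a ∈ (sfracs B μ).attach, c a * v a l := by
              apply Finset.sum_congr rfl; intro a _; rw [dif_pos a.2]
      rw [key, ← sum_coe_attach, h0]; ring
    · left; exact ⟨a0.1, a0.2, by simp only [dif_pos a0.2]; simpa using ha0⟩

lemma move_in_Icc {x d θ : ℝ} (hx : 0 < x) (hx1 : x < 1) (hd : d ≠ 0) (hθ : 0 < θ)
    (hθi : θ ≤ if 0 < d then (1 - x)/d else x/(-d)) :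
    0 ≤ x + θ * d ∧ x + θ * d ≤ 1 := by
  rcases lt_or_gt_of_ne hd with hneg | hpos
  · rw [if_neg (by linarith)] at hθi
    have h1 : θ * (-d) ≤ x := by
      have := (le_div_iff₀ (by linarith : (0:ℝ) < -d)).mp hθi
      linarith
    constructor <;> nlinarith
  · rw [if_pos hpos] at hθi
    have h1 : θ * d ≤ 1 - x := by
      have := (le_div_iff₀ hpos).mp hθi
      linarith
    constructor <;> nlinarith

lemma move_hits {x d : ℝ} (hd : d ≠ 0) :
    x + (if 0 < d then (1 - x)/d else x/(-d)) * d = 1 ∨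
    x + (if 0 < d then (1 - x)/d else x/(-d)) * d = 0 := by
  rcases lt_or_gt_of_ne hd with hneg | hpos
  · right
    rw [if_neg (by linarith), div_neg, neg_mul, div_mul_cancel₀ _ hd]
    ring
  · left
    rw [if_pos hpos, div_mul_cancel₀ _ hd]
    ring

lemma theta_pos {x d : ℝ} (hx0 : 0 < x) (hx1 : x < 1) (hd : d ≠ 0) :
    0 < if 0 < d then (1-x)/d else x/(-d) := by
  rcases lt_or_gt_of_ne hd with hneg | hpos
  · rw [if_neg (by linarith)]
    apply div_pos hx0; linarith
  · rw [if_pos hpos]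
    apply div_pos _ hpos; linarith

lemma pivot_step {B : Finset (Fin m)} {c : ℝ} {μ : Fin m → ℝ} {t : ℝ}
    (h : SFeas v u B c μ t) (hfc : r + 2 ≤ sfc B μ t) :
    ∃ μ' t', SFeas v u B c μ' t' ∧ sfc B μ' t' < sfc B μ t := by
  obtain ⟨hbox, htbox, hsum, hvsum⟩ := h
  obtain ⟨δ, dt, hsupp, hδ0, hδv, hdtb, hnz⟩ := exists_direction v u hfc
  have hint : ∀ i ∈ sfracs B μ, 0 < μ i ∧ μ i < 1 := by
    intro i hi
    rw [sfracs, Finset.mem_filter] at hi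
    obtain ⟨hiB, h0, h1⟩ := hi
    obtain ⟨ha, hb⟩ := hbox i hiB
    exact ⟨lt_of_le_of_ne ha (Ne.symm h0), lt_of_le_of_ne hb h1⟩
  set θf : Option (Fin m) → ℝ := fun o =>
    Option.elim o (if 0 < dt then (1 - t)/dt else t/(-dt))
      (fun i => if 0 < δ i then (1 - μ i)/(δ i) else (μ i)/(-(δ i))) with hθf
  set M : Finset (Option (Fin m)) :=
    ((sfracs B μ).filter (fun i => δ i ≠ 0)).image some ∪
      (if dt ≠ 0 then {none} else ∅) with hM
  have hMsome : ∀ i : Fin m, some i ∈ M → (0 < μ i ∧ μ i < 1 ∧ δ i ≠ 0) ∧ i ∈ sfracs B μ := by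
    intro i hoM
    rw [hM, Finset.mem_union] at hoM
    rcases hoM with hoM | hoM
    · rw [Finset.mem_image] at hoM
      obtain ⟨j, hj, hji⟩ := hoM
      rw [Option.some_inj] at hji
      subst hji
      have hjmem : j ∈ sfracs B μ := (Finset.mem_filter.mp hj).1
      obtain ⟨h1, h2⟩ := hint j hjmem
      exact ⟨⟨h1, h2, (Finset.mem_filter.mp hj).2⟩, hjmem⟩
    · by_cases hdt : dt ≠ 0
      · rw [if_pos hdt, Finset.mem_singleton] at hoM; exact absurd hoM (by simp)
      · rw [if_neg hdt] at hoM; simp at hoM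
  have hMnone : none ∈ M → 0 < t ∧ t < 1 ∧ dt ≠ 0 := by
    intro hoM
    rw [hM, Finset.mem_union] at hoM
    rcases hoM with hoM | hoM
    · rw [Finset.mem_image] at hoM
      obtain ⟨j, _, hji⟩ := hoM
      exact absurd hji (by simp)
    · by_cases hdt : dt ≠ 0
      · have htint : t ≠ 0 ∧ t ≠ 1 := by
          constructor <;> intro hh <;> exact hdt (hdtb (by tauto))
        exact ⟨lt_of_le_of_ne htbox.1 (Ne.symm htint.1),
               lt_of_le_of_ne htbox.2 htint.2, hdt⟩
      · rw [if_neg hdt] at hoM; simp at hoM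
  have hMmemsome : ∀ i ∈ sfracs B μ, δ i ≠ 0 → some i ∈ M := by
    intro i hif hid
    rw [hM, Finset.mem_union]; left
    rw [Finset.mem_image]
    exact ⟨i, Finset.mem_filter.mpr ⟨hif, hid⟩, rfl⟩
  have hMne : M.Nonempty := by
    rcases hnz with ⟨i, hif, hid⟩ | hdt
    · exact ⟨some i, hMmemsome i hif hid⟩
    · exact ⟨none, by rw [hM, Finset.mem_union]; right; rw [if_pos hdt]; simp⟩
  obtain ⟨o0, ho0M, ho0min⟩ := M.exists_min_image θf hMne
  set θ : ℝ := θf o0 with hθdef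
  have hθpos : ∀ o ∈ M, 0 < θf o := by
    intro o hoM
    cases o with
    | none =>
      obtain ⟨h1, h2, h3⟩ := hMnone hoM
      exact theta_pos h1 h2 h3
    | some i =>
      obtain ⟨⟨h1, h2, h3⟩, _⟩ := hMsome i hoM
      exact theta_pos h1 h2 h3
  have hθp : 0 < θ := hθpos o0 ho0M
  -- the new point
  refine ⟨fun i => μ i + θ * δ i, t + θ * dt, ⟨?_, ?_, ?_, ?_⟩, ?_⟩
  · -- box
    intro i hiB
    by_cases hδi : δ i = 0
    · simp only [hδi, mul_zero, add_zero]; exact hbox i hiB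
    · have hiF : i ∈ sfracs B μ := by
        by_contra hc'; exact hδi (hsupp i hc')
      obtain ⟨h1, h2⟩ := hint i hiF
      have := move_in_Icc h1 h2 hδi hθp (ho0min (some i) (hMmemsome i hiF hδi))
      exact ⟨this.1, this.2⟩
  · -- t box
    by_cases hdt : dt = 0
    · simp only [hdt, mul_zero, add_zero]; exact htbox
    · have hnM : none ∈ M := by
        rw [hM, Finset.mem_union]; right; rw [if_pos hdt]; simp
      obtain ⟨h1, h2, _⟩ := hMnone hnM
      have := move_in_Icc h1 h2 hdt hθp (ho0min none hnM)
      exact ⟨this.1, this.2⟩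
  · rw [Finset.sum_add_distrib, hsum, ← Finset.mul_sum, hδ0]; ring
  · intro l
    have expand : ∀ i ∈ B, (μ i + θ * δ i) * v i l = μ i * v i l + θ * (δ i * v i l) := by
      intro i _; ring
    rw [Finset.sum_congr rfl expand, Finset.sum_add_distrib, ← Finset.mul_sum, hvsum, hδv]
    ring
  · -- decrease of fractional count
    have hsub : sfracs B (fun i => μ i + θ * δ i) ⊆ sfracs B μ := by
      intro i hi
      rw [sfracs, Finset.mem_filter] at hi
      by_contra hiF
      have hδi := hsupp i hiF
      rw [hδi, mul_zero, add_zero] at hi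
      exact hiF (Finset.mem_filter.mpr hi)
    have hind : (if t + θ * dt ≠ 0 ∧ t + θ * dt ≠ 1 then 1 else 0)
        ≤ (if t ≠ 0 ∧ t ≠ 1 then 1 else 0) := by
      by_cases hdt : dt = 0
      · rw [hdt, mul_zero, add_zero]
      · have hnM : none ∈ M := by
          rw [hM, Finset.mem_union]; right; rw [if_pos hdt]; simp
        obtain ⟨h1, h2, _⟩ := hMnone hnM
        have ht' : t ≠ 0 ∧ t ≠ 1 := ⟨ne_of_gt h1, ne_of_lt h2⟩
        rw [if_pos ht']
        split <;> omega
    cases o0 with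
    | some i0 =>
      obtain ⟨⟨h1, h2, h3⟩, hi0F⟩ := hMsome i0 ho0M
      have hθeq : θ = if 0 < δ i0 then (1 - μ i0)/(δ i0) else (μ i0)/(-(δ i0)) := rfl
      have hhit := move_hits (x := μ i0) h3
      rw [← hθeq] at hhit
      have hi0notF : i0 ∉ sfracs B (fun i => μ i + θ * δ i) := by
        rw [sfracs, Finset.mem_filter]
        rcases hhit with hh | hh <;> simp [hh]
      have hlt : (sfracs B (fun i => μ i + θ * δ i)).card < (sfracs B μ).card := by
        apply Finset.card_lt_card
        rw [Finset.ssubset_iff_of_subset hsub]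
        exact ⟨i0, hi0F, hi0notF⟩
      unfold sfc
      omega
    | none =>
      obtain ⟨h1, h2, h3⟩ := hMnone ho0M
      have hθeq : θ = if 0 < dt then (1 - t)/dt else t/(-dt) := rfl
      have hhit := move_hits (x := t) h3
      rw [← hθeq] at hhit
      have hle : (sfracs B (fun i => μ i + θ * δ i)).card ≤ (sfracs B μ).card :=
        Finset.card_le_card hsub
      have hind1 : (if t ≠ 0 ∧ t ≠ 1 then 1 else 0) = 1 :=
        if_pos ⟨ne_of_gt h1, ne_of_lt h2⟩
      have hind0 : (if t + θ * dt ≠ 0 ∧ t + θ * dt ≠ 1 then 1 else 0) = 0 := by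
        rcases hhit with hh | hh <;> rw [hh] <;> simp
      unfold sfc
      omega
lemma pivot {B : Finset (Fin m)} {c : ℝ} {μ : Fin m → ℝ} {t : ℝ}
    (h : SFeas v u B c μ t) :
    ∃ μ' t', SFeas v u B c μ' t' ∧ sfc B μ' t' ≤ r + 1 := by
  suffices H : ∀ n (μ : Fin m → ℝ) (t : ℝ), sfc B μ t = n → SFeas v u B c μ t →
      ∃ μ' t', SFeas v u B c μ' t' ∧ sfc B μ' t' ≤ r + 1 by
    exact H (sfc B μ t) μ t rfl h
  intro n
  induction n using Nat.strong_induction_on with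
  | _ n ih =>
    intro μ t hn hfeas
    by_cases hle : sfc B μ t ≤ r + 1
    · exact ⟨μ, t, hfeas, hle⟩
    · obtain ⟨μ', t', hfeas', hlt⟩ := pivot_step v u hfeas (by omega)
      exact ih (sfc B μ' t') (by omega) μ' t' rfl hfeas'

lemma find_zero {B : Finset (Fin m)} {μ : Fin m → ℝ} {t : ℝ} (hk : r + 1 ≤ B.card)
    (h : SFeas v u B ((B.card : ℝ) - 1 - r) μ t) (hfc : sfc B μ t ≤ r + 1) :
    ∃ j ∈ B, μ j = 0 := by
  obtain ⟨hbox, htbox, hsum, hvsum⟩ := h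
  by_contra hcon
  push_neg at hcon
  set O : Finset (Fin m) := B.filter (fun i => μ i = 1) with hO
  have hBsplit : B = O ∪ sfracs B μ := by
    ext i
    rw [Finset.mem_union, hO, sfracs, Finset.mem_filter, Finset.mem_filter]
    constructor
    · intro hi
      by_cases h1 : μ i = 1
      · exact Or.inl ⟨hi, h1⟩
      · exact Or.inr ⟨hi, hcon i hi, h1⟩
    · rintro (hi | hi) <;> exact hi.1
  have hdisj : Disjoint O (sfracs B μ) := by
    rw [Finset.disjoint_left]
    intro i hiO hiF
    rw [hO, Finset.mem_filter] at hiO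
    rw [sfracs, Finset.mem_filter] at hiF
    exact hiF.2.2 hiO.2
  have hcards : O.card + (sfracs B μ).card = B.card := by
    rw [← Finset.card_union_of_disjoint hdisj, ← hBsplit]
  have hsumO : ∑ i ∈ O, μ i = (O.card : ℝ) := by
    rw [Finset.sum_congr rfl (fun i hi => (Finset.mem_filter.mp hi).2)]
    simp
    rfl
  have hsumsplit : ∑ i ∈ O, μ i + ∑ i ∈ sfracs B μ, μ i = (B.card : ℝ) - 1 - r := by
    rw [← Finset.sum_union hdisj, ← hBsplit, hsum]
  have hcardF : (sfracs B μ).card ≤ r + 1 := by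
    unfold sfc at hfc; omega
  have hsumF : ∑ i ∈ sfracs B μ, μ i = ((sfracs B μ).card : ℝ) - 1 - r := by
    have : (O.card : ℝ) = (B.card : ℝ) - ((sfracs B μ).card : ℝ) := by
      have := hcards
      push_cast [← this]
      ring
    rw [hsumO, this] at hsumsplit
    linarith
  have hFle : (((sfracs B μ).card : ℝ)) ≤ (r : ℝ) + 1 := by
    exact_mod_cast hcardF
  rcases Finset.eq_empty_or_nonempty (sfracs B μ) with hemp | hne
  · rw [hemp] at hsumF
    simp at hsumF
    have : (0:ℝ) ≤ (r:ℝ) := by positivity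
    linarith
  · have hpos : 0 < ∑ i ∈ sfracs B μ, μ i := by
      apply Finset.sum_pos _ hne
      intro i hi
      rw [sfracs, Finset.mem_filter] at hi
      exact lt_of_le_of_ne (hbox i hi.1).1 (Ne.symm hi.2.1)
    have hone : (1:ℝ) ≤ ((sfracs B μ).card : ℝ) := by
      have := Finset.card_pos.mpr hne
      exact_mod_cast this
    linarith

/-- The invariant along the chain. -/
def SInv (B : Finset (Fin m)) : Prop :=
  ∃ μ t, SFeas v u B ((B.card : ℝ) - r) μ t

lemma inv_step {B : Finset (Fin m)} (hk : r + 1 ≤ B.card) (h : SInv v u B) :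
    ∃ j ∈ B, SInv v u (B.erase j) := by
  obtain ⟨μ, t, hbox, htbox, hsum, hvsum⟩ := h
  have hkr : (1:ℝ) ≤ (B.card : ℝ) - r := by
    have : ((r:ℝ) + 1) ≤ (B.card : ℝ) := by exact_mod_cast hk
    linarith
  set ρ : ℝ := ((B.card : ℝ) - 1 - r)/((B.card : ℝ) - r) with hρ
  have hρ0 : 0 ≤ ρ := by
    apply div_nonneg <;> linarith
  have hρ1 : ρ ≤ 1 := by
    rw [hρ, div_le_one (by linarith)]; linarith
  have hfeas2 : SFeas v u B ((B.card : ℝ) - 1 - r) (fun i => ρ * μ i) (ρ * t) := by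
    refine ⟨?_, ?_, ?_, ?_⟩
    · intro i hiB
      obtain ⟨h1, h2⟩ := hbox i hiB
      exact ⟨mul_nonneg hρ0 h1, mul_le_one₀ hρ1 h1 h2⟩
    · exact ⟨mul_nonneg hρ0 htbox.1, mul_le_one₀ hρ1 htbox.1 htbox.2⟩
    · rw [← Finset.mul_sum, hsum, hρ, div_mul_cancel₀ _ (by linarith : (B.card : ℝ) - r ≠ 0)]
    · intro l
      have : ∀ i ∈ B, (ρ * μ i) * v i l = ρ * (μ i * v i l) := fun i _ => by ring
      rw [Finset.sum_congr rfl this, ← Finset.mul_sum, hvsum]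
      ring
  obtain ⟨μ', t', hfeas', hfc'⟩ := pivot v u hfeas2
  obtain ⟨j, hjB, hj0⟩ := find_zero v u hk hfeas' hfc'
  obtain ⟨hbox', htbox', hsum', hvsum'⟩ := hfeas'
  refine ⟨j, hjB, μ', t', ?_, htbox', ?_, ?_⟩
  · intro i hi
    exact hbox' i (Finset.mem_of_mem_erase hi)
  · rw [Finset.card_erase_of_mem hjB]
    have : ∑ i ∈ B.erase j, μ' i = ∑ i ∈ B, μ' i - μ' j := by
      rw [← Finset.add_sum_erase B μ' hjB]; ring
    rw [this, hsum', hj0]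
    have : ((B.card - 1 : ℕ) : ℝ) = (B.card : ℝ) - 1 := by
      have : 1 ≤ B.card := by omega
      push_cast [Nat.cast_sub this]
      ring
    rw [this]
    ring
  · intro l
    have : ∑ i ∈ B.erase j, μ' i * v i l = ∑ i ∈ B, μ' i * v i l - μ' j * v j l := by
      rw [← Finset.add_sum_erase B _ hjB]; ring
    rw [this, hvsum' l, hj0]
    ring
/-- The goal predicate: partial sums near the segment. -/
def SGB (D : ℝ) (B : Finset (Fin m)) : Prop :=
  ∃ τ ∈ Set.Icc (0:ℝ) 1, ∀ l, |(∑ i ∈ B, v i l) - τ * u l| ≤ r * D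

lemma gb_small {D : ℝ} (hD : 0 ≤ D) (hvb : ∀ i l, |v i l| ≤ D)
    {B : Finset (Fin m)} (hcard : B.card ≤ r) : SGB v u D B := by
  refine ⟨0, ⟨le_refl _, zero_le_one⟩, ?_⟩
  intro l
  rw [zero_mul, sub_zero]
  calc |∑ i ∈ B, v i l| ≤ ∑ i ∈ B, |v i l| := Finset.abs_sum_le_sum_abs _ _
    _ ≤ ∑ i ∈ B, D := Finset.sum_le_sum (fun i _ => hvb i l)
    _ = (B.card : ℝ) * D := by rw [Finset.sum_const, nsmul_eq_mul]
    _ ≤ (r : ℝ) * D := by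
        apply mul_le_mul_of_nonneg_right _ hD
        exact_mod_cast hcard

lemma gb_of_inv {D : ℝ} (hD : 0 ≤ D) (hvb : ∀ i l, |v i l| ≤ D)
    {B : Finset (Fin m)} (h : SInv v u B) : SGB v u D B := by
  obtain ⟨μ, t, hbox, htbox, hsum, hvsum⟩ := h
  refine ⟨t, htbox, ?_⟩
  intro l
  have hkey : (∑ i ∈ B, v i l) - t * u l = ∑ i ∈ B, (1 - μ i) * v i l := by
    rw [← hvsum l, ← Finset.sum_sub_distrib]
    apply Finset.sum_congr rfl
    intro i _; ring
  rw [hkey]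
  calc |∑ i ∈ B, (1 - μ i) * v i l| ≤ ∑ i ∈ B, |(1 - μ i) * v i l| :=
        Finset.abs_sum_le_sum_abs _ _
    _ ≤ ∑ i ∈ B, (1 - μ i) * D := by
        apply Finset.sum_le_sum
        intro i hi
        rw [abs_mul]
        obtain ⟨h1, h2⟩ := hbox i hi
        rw [abs_of_nonneg (by linarith : 0 ≤ 1 - μ i)]
        exact mul_le_mul_of_nonneg_left (hvb i l) (by linarith)
    _ = (r : ℝ) * D := by
        rw [Finset.sum_congr rfl (fun i (_ : i ∈ B) => sub_mul 1 (μ i) D),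
          Finset.sum_sub_distrib, ← Finset.sum_mul, ← Finset.sum_mul, hsum]
        simp
        ring

lemma inv_univ (hu : ∀ l, ∑ i, v i l = u l) (hrm : r ≤ m) :
    SInv v u (Finset.univ : Finset (Fin m)) := by
  rcases Nat.eq_zero_or_pos m with hm | hm
  · refine ⟨fun _ => 0, 0, ?_, ⟨le_refl _, zero_le_one⟩, ?_, ?_⟩
    · intro i _; exact ⟨le_refl _, zero_le_one⟩
    · have hr : r = 0 := by omega
      subst hm
      simp [hr]
    · subst hm
      intro l
      exact absurd l.2 (by omega)
  · set ρ : ℝ := ((m:ℝ) - r)/(m:ℝ) with hρ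
    have hm0 : (0:ℝ) < (m:ℝ) := by exact_mod_cast hm
    have hrm' : (r:ℝ) ≤ (m:ℝ) := by exact_mod_cast hrm
    have hρ0 : 0 ≤ ρ := div_nonneg (by linarith) (by linarith)
    have hρ1 : ρ ≤ 1 := by rw [hρ, div_le_one hm0]; linarith
    refine ⟨fun _ => ρ, ρ, ?_, ⟨hρ0, hρ1⟩, ?_, ?_⟩
    · intro i _; exact ⟨hρ0, hρ1⟩
    · rw [Finset.sum_const, nsmul_eq_mul, Finset.card_univ, Fintype.card_fin, hρ]
      field_simp
    · intro l
      rw [← Finset.mul_sum, hu l]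

lemma exists_chain {D : ℝ} (hD : 0 ≤ D) (hvb : ∀ i l, |v i l| ≤ D) :
    ∀ (n : ℕ) (B : Finset (Fin m)), B.card = n → (r ≤ n → SInv v u B) →
    ∃ A : ℕ → Finset (Fin m), A n = B ∧ (∀ k ≤ n, (A k).card = k) ∧
      (∀ k < n, A k ⊆ A (k+1)) ∧ (∀ k ≤ n, SGB v u D (A k)) := by
  intro n
  induction n with
  | zero =>
    intro B hB _
    refine ⟨fun _ => ∅, (Finset.card_eq_zero.mp hB).symm, ?_, ?_, ?_⟩
    · intro k hk
      interval_cases k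
      simp
    · intro k hk; omega
    · intro k hk
      interval_cases k
      exact gb_small v u hD hvb (by simp)
  | succ n ih =>
    intro B hB hInv
    have hstep : ∃ j ∈ B, (r ≤ n → SInv v u (B.erase j)) := by
      by_cases hr : r ≤ n
      · obtain ⟨j, hjB, hjInv⟩ := inv_step v u (by omega) (hInv (by omega))
        exact ⟨j, hjB, fun _ => hjInv⟩
      · obtain ⟨j, hjB⟩ := Finset.card_pos.mp (by omega : 0 < B.card)
        exact ⟨j, hjB, fun h => absurd h hr⟩
    obtain ⟨j, hjB, hjInv⟩ := hstep
    have hcard' : (B.erase j).card = n := by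
      rw [Finset.card_erase_of_mem hjB, hB]
      omega
    obtain ⟨A', hA'B, hA'card, hA'sub, hA'GB⟩ := ih (B.erase j) hcard' hjInv
    refine ⟨fun k => if k = n + 1 then B else A' k, by simp, ?_, ?_, ?_⟩
    · intro k hk
      by_cases hkn : k = n + 1
      · simp [hkn, hB]
      · simp only [if_neg hkn]
        exact hA'card k (by omega)
    · intro k hk
      by_cases hkn : k = n
      · have h1 : k ≠ n + 1 := by omega
        have h2 : k + 1 = n + 1 := by omega
        simp only [if_neg h1, if_pos h2]
        rw [hkn, hA'B]
        exact Finset.erase_subset _ _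
      · simp only [if_neg (by omega : k ≠ n + 1), if_neg (by omega : k + 1 ≠ n + 1)]
        exact hA'sub k (by omega)
    · intro k hk
      by_cases hkn : k = n + 1
      · simp only [if_pos hkn]
        by_cases hr : n + 1 ≤ r
        · exact gb_small v u hD hvb (by omega)
        · exact gb_of_inv v u hD hvb (hInv (by omega))
      · simp only [if_neg hkn]
        exact hA'GB k (by omega)
lemma exists_perm {A : ℕ → Finset (Fin m)} (hcard : ∀ k ≤ m, (A k).card = k)
    (hsub : ∀ k < m, A k ⊆ A (k+1)) :
    ∃ π : Equiv.Perm (Fin m), ∀ k ≤ m,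
      Finset.image π (Finset.univ.filter (fun j : Fin m => (j:ℕ) < k)) = A k := by
  have hone : ∀ j : Fin m, ∃ a, A (j.val + 1) \ A j.val = {a} := by
    intro j
    apply Finset.card_eq_one.mp
    rw [Finset.card_sdiff_of_subset (hsub j.val j.isLt), hcard (j.val+1) (by omega),
      hcard j.val (by omega)]
    omega
  choose e he using hone
  have heMem : ∀ j : Fin m, e j ∈ A (j.val + 1) ∧ e j ∉ A j.val := by
    intro j
    have : e j ∈ A (j.val + 1) \ A j.val := by rw [he j]; simp
    exact ⟨(Finset.mem_sdiff.mp this).1, (Finset.mem_sdiff.mp this).2⟩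
  have himage : ∀ k ≤ m, Finset.image e (Finset.univ.filter (fun j : Fin m => (j:ℕ) < k)) = A k := by
    intro k
    induction k with
    | zero =>
      intro _
      have h1 : (Finset.univ.filter (fun j : Fin m => (j:ℕ) < 0)) = ∅ := by
        apply Finset.filter_false_of_mem; intro j _; omega
      rw [h1, Finset.image_empty]
      exact (Finset.card_eq_zero.mp (hcard 0 (by omega))).symm
    | succ k ih =>
      intro hk1
      have hk : k < m := by omega
      have hfilt : (Finset.univ.filter (fun j : Fin m => (j:ℕ) < k + 1))
          = insert (⟨k, hk⟩ : Fin m) (Finset.univ.filter (fun j : Fin m => (j:ℕ) < k)) := by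
        ext j
        simp only [Finset.mem_filter, Finset.mem_insert, Finset.mem_univ, true_and]
        rw [Fin.ext_iff]
        simp only [Fin.val_mk]
        omega
      rw [hfilt, Finset.image_insert, ih (by omega)]
      have hem : e ⟨k, hk⟩ ∈ A (k + 1) := (heMem ⟨k, hk⟩).1
      have hen : e ⟨k, hk⟩ ∉ A k := (heMem ⟨k, hk⟩).2
      apply Finset.eq_of_subset_of_card_le
      · intro x hx
        rcases Finset.mem_insert.mp hx with hx | hx
        · rw [hx]; exact hem
        · exact hsub k hk hx
      · rw [hcard (k+1) (by omega), Finset.card_insert_of_notMem hen,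
          hcard k (by omega)]
  have hsurj : Function.Surjective e := by
    intro y
    have hfiltm : (Finset.univ.filter (fun j : Fin m => (j:ℕ) < m)) = Finset.univ := by
      apply Finset.filter_true_of_mem; intro j _; exact j.isLt
    have hAm : A m = Finset.univ := by
      apply Finset.eq_univ_of_card
      rw [hcard m (le_refl m), Fintype.card_fin]
    have := himage m (le_refl m)
    rw [hfiltm, hAm] at this
    have hy : y ∈ Finset.image e Finset.univ := by rw [this]; exact Finset.mem_univ y
    obtain ⟨j, _, hj⟩ := Finset.mem_image.mp hy
    exact ⟨j, hj⟩
  have hbij : Function.Bijective e := Finite.surjective_iff_bijective.mp hsurj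
  refine ⟨Equiv.ofBijective e hbij, ?_⟩
  intro k hk
  rw [← himage k hk]
  rfl
end SteinitzAux
/-- Vectors of `ℓ∞`-norm at most `D` summing to `u` can be
rearranged so that every partial sum is within `ℓ∞`-distance `r·D` of the line
segment from `0` to `u`. -/
theorem steinitz_rearrangement_along_segment
    (r m : ℕ) (D : ℝ) (hD : 0 < D)
    (v : Fin m → Fin r → ℝ)
    (hv : ∀ i k, |v i k| ≤ D)
    (u : Fin r → ℝ) (hu : u = ∑ i, v i) :
    ∃ π : Equiv.Perm (Fin m), ∀ k : ℕ, 1 ≤ k → k ≤ m →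
      ∃ τ ∈ Set.Icc (0 : ℝ) 1, ∀ l : Fin r,
        |(∑ j ∈ Finset.filter (fun j : Fin m => (j : ℕ) < k) Finset.univ, v (π j)) l
          - τ * u l| ≤ r * D := by
  have hu' : ∀ l, ∑ i, v i l = u l := by
    intro l; rw [hu]; rw [Finset.sum_apply]
  have hInvUniv : r ≤ m → SInv v u (Finset.univ : Finset (Fin m)) := inv_univ v u hu'
  have hcardUniv : (Finset.univ : Finset (Fin m)).card = m := by
    rw [Finset.card_univ, Fintype.card_fin]
  obtain ⟨A, hAm, hAcard, hAsub, hAGB⟩ :=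
    exists_chain v u (le_of_lt hD) hv m Finset.univ hcardUniv hInvUniv
  obtain ⟨π, hπ⟩ := exists_perm (fun k hk => by rw [hAcard k hk]) hAsub
  refine ⟨π, ?_⟩
  intro k hk1 hkm
  obtain ⟨τ, hτ, hbound⟩ := hAGB k hkm
  refine ⟨τ, hτ, ?_⟩
  intro l
  have hsum : (∑ j ∈ Finset.filter (fun j : Fin m => (j : ℕ) < k) Finset.univ, v (π j)) l
      = ∑ i ∈ A k, v i l := by
    rw [Finset.sum_apply, ← hπ k hkm,
      Finset.sum_image (fun a _ b _ h => π.injective h)]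
  rw [hsum]
  exact hbound l
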